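/- arXiv:1611.09408 — 2 statements merged into one kernel-verified Lean document; each statement's English description precedes it below -/
import Mathlib

section
/- Finite mixtures of Gaussian densities are identifiable: let n, m ≥ 1, let w : Fin n → ℝ and w' : Fin m → ℝ be weights with wᵢ > 0, Σᵢ wᵢ = 1, w'ⱼ > 0, Σⱼ w'ⱼ = 1, and let (μᵢ, σᵢ)_{i ∈ Fin n} and (μ'ⱼ, σ'ⱼ)_{j ∈ Fin m} be parameter pairs with every σᵢ, σ'ⱼ > 0 and the pairs within each family pairwise distinct. If Σ_{i ∈ Fin n} wᵢ φ(y; μᵢ, σᵢ) = Σ_{j ∈ Fin m} w'ⱼ φ(y; μ'ⱼ, σ'ⱼ) for every y ∈ ℝ, then n = m and there exists a bijection e : Fin n ≃ Fin m with w'_{e(i)} = wᵢ, μ'_{e(i)} = μᵢ and σ'_{e(i)} = σᵢ for all i. -/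
open Filter Real


lemma quad_atBot {a : ℝ} (b d : ℝ) (ha : a < 0) :
    Tendsto (fun y : ℝ => a*y^2 + b*y + d) atTop atBot := by
  have h1 : Tendsto (fun y : ℝ => a*y + b) atTop atBot :=
    tendsto_atBot_add_const_right _ b (tendsto_id.const_mul_atTop_of_neg ha)
  have h2 : Tendsto (fun y : ℝ => y * (a*y + b)) atTop atBot :=
    tendsto_id.atTop_mul_atBot₀ h1
  exact (tendsto_atBot_add_const_right atTop d h2).congr (fun y => by ring)

lemma lin_atBot {b : ℝ} (d : ℝ) (hb : b < 0) :
    Tendsto (fun y : ℝ => b*y + d) atTop atBot :=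
  tendsto_atBot_add_const_right _ d (tendsto_id.const_mul_atTop_of_neg hb)

/-- The exponential ratio tends to 0 when `(p.2, p.1) <lex (σ₀, μ₀)`. -/
lemma ratio_tendsto_zero (p : ℝ × ℝ) (μ₀ σ₀ : ℝ) (hp2 : 0 < p.2) (hσ₀ : 0 < σ₀)
    (hlt : p.2 < σ₀ ∨ (p.2 = σ₀ ∧ p.1 < μ₀)) :
    Tendsto (fun y : ℝ => Real.exp (-(y - p.1)^2 / (2 * p.2^2) + (y - μ₀)^2 / (2 * σ₀^2)))
      atTop (nhds 0) := by
  set a : ℝ := 1/(2*σ₀^2) - 1/(2*p.2^2) with ha_def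
  set b : ℝ := p.1/p.2^2 - μ₀/σ₀^2 with hb_def
  set d : ℝ := μ₀^2/(2*σ₀^2) - p.1^2/(2*p.2^2) with hd_def
  have hkey : ∀ y : ℝ, -(y - p.1)^2 / (2 * p.2^2) + (y - μ₀)^2 / (2 * σ₀^2)
      = a*y^2 + b*y + d := by
    intro y
    have h1 : p.2 ≠ 0 := ne_of_gt hp2
    have h2 : σ₀ ≠ 0 := ne_of_gt hσ₀
    rw [ha_def, hb_def, hd_def]
    field_simp [ha_def, hb_def, hd_def]
    ring
  have htend : Tendsto (fun y : ℝ => a*y^2 + b*y + d) atTop atBot := by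
    rcases hlt with h | ⟨h2, h1⟩
    · apply quad_atBot
      have : 1/(2*σ₀^2) < 1/(2*p.2^2) := by
        apply one_div_lt_one_div_of_lt (by positivity)
        have := sq_lt_sq' (by linarith) h
        nlinarith
      simpa [ha_def, sub_neg] using this
    · have ha0 : a = 0 := by simp [ha_def, h2]
      have hb0 : b < 0 := by
        have : b = (p.1 - μ₀)/σ₀^2 := by rw [hb_def, h2]; ring
        rw [this]
        exact div_neg_of_neg_of_pos (by linarith) (by positivity)
      exact (lin_atBot d hb0).congr (fun y => by rw [ha0]; ring)
  have := Real.tendsto_exp_atBot.comp htend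
  refine this.congr (fun y => ?_)
  simp only [Function.comp_apply]
  rw [hkey y]

/-- Linear independence of distinct Gaussian exponentials. -/
lemma gauss_indep (s : Finset (ℝ × ℝ)) :
    (∀ p ∈ s, 0 < p.2) → ∀ (c : ℝ × ℝ → ℝ),
    (∀ y : ℝ, ∑ p ∈ s, c p * Real.exp (-(y - p.1)^2 / (2 * p.2^2)) = 0) →
    ∀ p ∈ s, c p = 0 := by
  induction s using Finset.strongInduction with
  | _ s ih =>
    intro hpos c hsum p hp
    -- s is nonempty
    have hne : s.Nonempty := ⟨p, hp⟩
    -- pick dominant element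
    have hne2 : (s.image Prod.snd).Nonempty := hne.image _
    set σ₀ := (s.image Prod.snd).max' hne2 with hσ₀def
    have hσ₀mem := (s.image Prod.snd).max'_mem hne2
    set t := s.filter (fun q => q.2 = σ₀) with ht_def
    have htne : t.Nonempty := by
      rcases Finset.mem_image.mp hσ₀mem with ⟨q, hq, hq2⟩
      exact ⟨q, Finset.mem_filter.mpr ⟨hq, hq2⟩⟩
    have hne3 : (t.image Prod.fst).Nonempty := htne.image _
    set μ₀ := (t.image Prod.fst).max' hne3 with hμ₀def
    have hμ₀mem := (t.image Prod.fst).max'_mem hne3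
    obtain ⟨q₀, hq₀t, hq₀1⟩ := Finset.mem_image.mp hμ₀mem
    have hq₀2 : q₀.2 = σ₀ := (Finset.mem_filter.mp hq₀t).2
    have hq₀s : q₀ ∈ s := (Finset.mem_filter.mp hq₀t).1
    have hq₀ : q₀ = (μ₀, σ₀) := Prod.ext hq₀1 hq₀2
    set p₀ : ℝ × ℝ := (μ₀, σ₀) with hp₀def
    have hp₀s : p₀ ∈ s := hq₀ ▸ hq₀s
    have hσ₀pos : 0 < σ₀ := hpos p₀ hp₀s
    -- dominance
    have hdom : ∀ q ∈ s, q ≠ p₀ → q.2 < σ₀ ∨ (q.2 = σ₀ ∧ q.1 < μ₀) := by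
      intro q hq hqne
      have h2le : q.2 ≤ σ₀ := Finset.le_max' _ _ (Finset.mem_image_of_mem _ hq)
      rcases lt_or_eq_of_le h2le with h | h
      · exact Or.inl h
      · refine Or.inr ⟨h, ?_⟩
        have hqt : q ∈ t := Finset.mem_filter.mpr ⟨hq, h⟩
        have h1le : q.1 ≤ μ₀ := Finset.le_max' _ _ (Finset.mem_image_of_mem _ hqt)
        rcases lt_or_eq_of_le h1le with h1 | h1
        · exact h1
        · exact absurd (Prod.ext h1 h) hqne
    -- c p₀ = 0 by asymptotics
    have hc0 : c p₀ = 0 := by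
      have hsum' : ∀ y : ℝ, ∑ q ∈ s,
          c q * Real.exp (-(y - q.1)^2 / (2 * q.2^2) + (y - μ₀)^2 / (2 * σ₀^2)) = 0 := by
        intro y
        have := hsum y
        have h2 : ∑ q ∈ s, c q * Real.exp (-(y - q.1)^2 / (2 * q.2^2) + (y - μ₀)^2 / (2 * σ₀^2))
            = (∑ q ∈ s, c q * Real.exp (-(y - q.1)^2 / (2 * q.2^2)))
              * Real.exp ((y - μ₀)^2 / (2 * σ₀^2)) := by
          rw [Finset.sum_mul]
          exact Finset.sum_congr rfl (fun q _ => by rw [Real.exp_add]; ring)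
        rw [h2, this, zero_mul]
      have htend : Tendsto (fun y : ℝ => ∑ q ∈ s,
          c q * Real.exp (-(y - q.1)^2 / (2 * q.2^2) + (y - μ₀)^2 / (2 * σ₀^2)))
          atTop (nhds (c p₀)) := by
        have : Tendsto (fun y : ℝ => ∑ q ∈ s,
            c q * Real.exp (-(y - q.1)^2 / (2 * q.2^2) + (y - μ₀)^2 / (2 * σ₀^2)))
            atTop (nhds (∑ q ∈ s, if q = p₀ then c p₀ else 0)) := by
          apply tendsto_finset_sum
          intro q hq
          by_cases hqe : q = p₀
          · subst hqe
            simp only [if_pos rfl]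
            have heq1 : (fun y : ℝ => c p₀ * Real.exp (-(y - p₀.1)^2 / (2 * p₀.2^2) + (y - μ₀)^2 / (2 * σ₀^2)))
                = fun _ => c p₀ := by
              funext y
              have h1 : p₀.1 = μ₀ := rfl
              have h2 : p₀.2 = σ₀ := rfl
              rw [h1, h2]
              have h3 : -(y - μ₀)^2 / (2 * σ₀^2) + (y - μ₀)^2 / (2 * σ₀^2) = 0 := by ring
              rw [h3, Real.exp_zero, mul_one]
            rw [heq1]
            exact tendsto_const_nhds
          · rw [if_neg hqe]
            have := (ratio_tendsto_zero q μ₀ σ₀ (hpos q hq) hσ₀pos (hdom q hq hqe)).const_mul (c q)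
            simpa using this
        simpa [Finset.sum_ite_eq' s p₀, hp₀s] using this
      have h0 : Tendsto (fun _ : ℝ => (0:ℝ)) atTop (nhds (c p₀)) :=
        htend.congr (fun y => hsum' y)
      exact tendsto_nhds_unique h0 tendsto_const_nhds
    -- induction on erase
    have herase : ∀ y : ℝ, ∑ q ∈ s.erase p₀, c q * Real.exp (-(y - q.1)^2 / (2 * q.2^2)) = 0 := by
      intro y
      have h2 := hsum y
      rw [← Finset.sum_erase_add s _ hp₀s, hc0, zero_mul, add_zero] at h2
      exact h2
    by_cases hpe : p = p₀
    · rw [hpe]; exact hc0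
    · exact ih (s.erase p₀) (Finset.erase_ssubset hp₀s)
        (fun q hq => hpos q (Finset.mem_of_mem_erase hq)) c herase p
        (Finset.mem_erase.mpr ⟨hpe, hp⟩)

lemma mixture_match {n m : ℕ} (W : Fin n → ℝ) (W' : Fin m → ℝ)
    (P : Fin n → ℝ × ℝ) (Q : Fin m → ℝ × ℝ)
    (hWpos : ∀ i, 0 < W i) (hW'pos : ∀ j, 0 < W' j)
    (hP2 : ∀ i, 0 < (P i).2) (hQ2 : ∀ j, 0 < (Q j).2)
    (hinjP : Function.Injective P) (hinjQ : Function.Injective Q)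
    (heqs : ∀ y : ℝ, ∑ i, W i * Real.exp (-(y - (P i).1)^2 / (2 * (P i).2^2))
         = ∑ j, W' j * Real.exp (-(y - (Q j).1)^2 / (2 * (Q j).2^2))) :
    ∃ e : Fin n ≃ Fin m, ∀ i, Q (e i) = P i ∧ W' (e i) = W i := by
  set S : Finset (ℝ × ℝ) := (Finset.univ.image P) ∪ (Finset.univ.image Q) with hS
  set c : ℝ × ℝ → ℝ := fun p =>
    (∑ i ∈ Finset.univ.filter (fun i => P i = p), W i)
      - (∑ j ∈ Finset.univ.filter (fun j => Q j = p), W' j) with hc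
  have hSpos : ∀ p ∈ S, 0 < p.2 := by
    intro p hp
    rcases Finset.mem_union.mp hp with h | h <;>
      obtain ⟨i, _, rfl⟩ := Finset.mem_image.mp h
    · exact hP2 i
    · exact hQ2 i
  have hPmem : ∀ i, P i ∈ S := fun i =>
    Finset.mem_union_left _ (Finset.mem_image_of_mem _ (Finset.mem_univ i))
  have hQmem : ∀ j, Q j ∈ S := fun j =>
    Finset.mem_union_right _ (Finset.mem_image_of_mem _ (Finset.mem_univ j))
  have key : ∀ (k : ℕ) (R : Fin k → ℝ × ℝ) (V : Fin k → ℝ), (∀ i, R i ∈ S) →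
      ∀ y : ℝ, ∑ p ∈ S, (∑ i ∈ Finset.univ.filter (fun i => R i = p), V i)
          * Real.exp (-(y - p.1)^2 / (2 * p.2^2))
        = ∑ i, V i * Real.exp (-(y - (R i).1)^2 / (2 * (R i).2^2)) := by
    intro k R V hR y
    rw [← Finset.sum_fiberwise_of_maps_to (fun i _ => hR i)
      (fun i => V i * Real.exp (-(y - (R i).1)^2 / (2 * (R i).2^2)))]
    refine Finset.sum_congr rfl (fun p hp => ?_)
    rw [Finset.sum_mul]
    refine Finset.sum_congr rfl (fun i hi => ?_)
    rw [(Finset.mem_filter.mp hi).2]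
  have hsum0 : ∀ y : ℝ, ∑ p ∈ S, c p * Real.exp (-(y - p.1)^2 / (2 * p.2^2)) = 0 := by
    intro y
    simp only [hc, sub_mul]
    rw [Finset.sum_sub_distrib, key n P W hPmem y, key m Q W' hQmem y, heqs y, sub_self]
  have hc0 := gauss_indep S hSpos c hsum0
  -- fiber singletons
  have hfib : ∀ (k : ℕ) (R : Fin k → ℝ × ℝ), Function.Injective R → ∀ (i : Fin k),
      Finset.univ.filter (fun i' => R i' = R i) = {i} := by
    intro k R hinj i
    ext i'
    simp only [Finset.mem_filter, Finset.mem_univ, true_and, Finset.mem_singleton]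
    exact ⟨fun h => hinj h, fun h => h ▸ rfl⟩
  -- matching both ways
  have hmatch : ∀ i, ∃ j, Q j = P i ∧ W' j = W i := by
    intro i
    have h := hc0 (P i) (hPmem i)
    rw [hc, sub_eq_zero, hfib n P hinjP i, Finset.sum_singleton] at h
    have hne : (Finset.univ.filter (fun j => Q j = P i)).Nonempty := by
      by_contra hcon
      rw [Finset.not_nonempty_iff_eq_empty] at hcon
      rw [hcon, Finset.sum_empty] at h
      exact (hWpos i).ne' h
    obtain ⟨j, hj⟩ := hne
    have hQj : Q j = P i := (Finset.mem_filter.mp hj).2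
    have hfib2 : Finset.univ.filter (fun j' => Q j' = P i) = {j} := by
      ext j'
      simp only [Finset.mem_filter, Finset.mem_univ, true_and, Finset.mem_singleton]
      exact ⟨fun h' => hinjQ (h'.trans hQj.symm), fun h' => h' ▸ hQj⟩
    rw [hfib2, Finset.sum_singleton] at h
    exact ⟨j, hQj, h.symm⟩
  have hmatch' : ∀ j, ∃ i, P i = Q j ∧ W i = W' j := by
    intro j
    have h := hc0 (Q j) (hQmem j)
    rw [hc, sub_eq_zero, hfib m Q hinjQ j, Finset.sum_singleton] at h
    have hne : (Finset.univ.filter (fun i => P i = Q j)).Nonempty := by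
      by_contra hcon
      rw [Finset.not_nonempty_iff_eq_empty] at hcon
      rw [hcon, Finset.sum_empty] at h
      exact (hW'pos j).ne' h.symm
    obtain ⟨i, hi⟩ := hne
    have hPi : P i = Q j := (Finset.mem_filter.mp hi).2
    have hfib2 : Finset.univ.filter (fun i' => P i' = Q j) = {i} := by
      ext i'
      simp only [Finset.mem_filter, Finset.mem_univ, true_and, Finset.mem_singleton]
      exact ⟨fun h' => hinjP (h'.trans hPi.symm), fun h' => h' ▸ hPi⟩
    rw [hfib2, Finset.sum_singleton] at h
    exact ⟨i, hPi, h⟩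
  choose e he1 he2 using hmatch
  choose f hf1 hf2 using hmatch'
  have hlf : Function.LeftInverse f e := by
    intro i
    exact hinjP ((hf1 (e i)).trans (he1 i))
  have hrf : Function.RightInverse f e := by
    intro j
    exact hinjQ ((he1 (f j)).trans (hf1 j))
  exact ⟨⟨e, f, hlf, hrf⟩, fun i => ⟨he1 i, he2 i⟩⟩

/-- The Gaussian density with mean `μ` and standard deviation `σ > 0`. -/
noncomputable def gaussDensity (μ σ y : ℝ) : ℝ :=
  (σ * Real.sqrt (2 * Real.pi))⁻¹ * Real.exp (-(y - μ) ^ 2 / (2 * σ ^ 2))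

/-- Finite mixtures of Gaussian densities are identifiable: two finite mixtures with
positive weights summing to one and pairwise distinct (mean, sd) parameter pairs that agree
as functions on ℝ must have the same number of components and matching parameters up to a
bijection of the component labels. -/
theorem gaussian_mixture_identifiable
    {n m : ℕ} (hn : 1 ≤ n) (hm : 1 ≤ m)
    (w : Fin n → ℝ) (w' : Fin m → ℝ)
    (μ σ : Fin n → ℝ) (μ' σ' : Fin m → ℝ)
    (hw : ∀ i, 0 < w i) (hwsum : ∑ i, w i = 1)
    (hw' : ∀ j, 0 < w' j) (hw'sum : ∑ j, w' j = 1)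
    (hσ : ∀ i, 0 < σ i) (hσ' : ∀ j, 0 < σ' j)
    (hdist : Function.Injective (fun i => (μ i, σ i)))
    (hdist' : Function.Injective (fun j => (μ' j, σ' j)))
    (heq : ∀ y : ℝ,
      ∑ i, w i * gaussDensity (μ i) (σ i) y = ∑ j, w' j * gaussDensity (μ' j) (σ' j) y) :
    n = m ∧ ∃ e : Fin n ≃ Fin m, ∀ i,
      w' (e i) = w i ∧ μ' (e i) = μ i ∧ σ' (e i) = σ i := by
  have hsqrt : 0 < Real.sqrt (2 * Real.pi) := Real.sqrt_pos.mpr (by positivity)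
  have hWpos : ∀ i, 0 < w i * (σ i * Real.sqrt (2 * Real.pi))⁻¹ := fun i => by
    have := hσ i; have := hw i; positivity
  have hW'pos : ∀ j, 0 < w' j * (σ' j * Real.sqrt (2 * Real.pi))⁻¹ := fun j => by
    have := hσ' j; have := hw' j; positivity
  have heqs : ∀ y : ℝ,
      ∑ i, (w i * (σ i * Real.sqrt (2 * Real.pi))⁻¹) *
        Real.exp (-(y - ((fun i => (μ i, σ i)) i).1)^2 / (2 * ((fun i => (μ i, σ i)) i).2^2))
      = ∑ j, (w' j * (σ' j * Real.sqrt (2 * Real.pi))⁻¹) *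
        Real.exp (-(y - ((fun j => (μ' j, σ' j)) j).1)^2 / (2 * ((fun j => (μ' j, σ' j)) j).2^2)) := by
    intro y
    have h := heq y
    simp only [gaussDensity] at h
    calc _ = ∑ i, w i * ((σ i * Real.sqrt (2 * Real.pi))⁻¹ *
              Real.exp (-(y - μ i) ^ 2 / (2 * σ i ^ 2))) :=
            Finset.sum_congr rfl (fun i _ => by ring)
      _ = ∑ j, w' j * ((σ' j * Real.sqrt (2 * Real.pi))⁻¹ *
              Real.exp (-(y - μ' j) ^ 2 / (2 * σ' j ^ 2))) := h
      _ = _ := Finset.sum_congr rfl (fun j _ => by ring)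
  obtain ⟨e, he⟩ := mixture_match
    (fun i => w i * (σ i * Real.sqrt (2 * Real.pi))⁻¹)
    (fun j => w' j * (σ' j * Real.sqrt (2 * Real.pi))⁻¹)
    (fun i => (μ i, σ i)) (fun j => (μ' j, σ' j))
    hWpos hW'pos (fun i => hσ i) (fun j => hσ' j) hdist hdist' heqs
  constructor
  · simpa using Fintype.card_congr e
  · refine ⟨e, fun i => ?_⟩
    obtain ⟨hQP, hW⟩ := he i
    have hμ : μ' (e i) = μ i := congrArg Prod.fst hQP
    have hσe : σ' (e i) = σ i := congrArg Prod.snd hQP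
    refine ⟨?_, hμ, hσe⟩
    rw [hσe] at hW
    have hne : (σ i * Real.sqrt (2 * Real.pi))⁻¹ ≠ 0 := by
      have := hσ i; positivity
    exact mul_right_cancel₀ hne hW
end

section
/- The normal regression model with a misclassified binary covariate is identified without knowledge of the reclassification probabilities, given the sign of the slope: let α₀, α₀' ∈ ℝ, α₁, α₁' > 0, σ, σ' > 0 and reclassification weights q₀, q₁, q₀', q₁' ∈ [0,1] with q₀ ∈ (0,1) and q₀' ∈ (0,1). If for each k ∈ {0,1} and every y ∈ ℝ, q_k · φ(y; α₀, σ) + (1 − q_k) · φ(y; α₀ + α₁, σ) = q'_k · φ(y; α₀', σ') + (1 − q'_k) · φ(y; α₀' + α₁', σ'), then α₀ = α₀', α₁ = α₁', σ = σ', q₀ = q₀' and q₁ = q₁'. -/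
open Filter Real

noncomputable def E (m s y : ℝ) : ℝ := Real.exp (-(y - m) ^ 2 / (2 * s ^ 2))

lemma exp_lin_zero {B C : ℝ} (hB : B < 0) :
    Tendsto (fun y : ℝ => Real.exp (B * y + C)) atTop (nhds 0) := by
  have h1 : Tendsto (fun y : ℝ => B * y + C) atTop atBot :=
    tendsto_atBot_add_const_right _ C ((tendsto_const_mul_atBot_of_neg hB).mpr tendsto_id)
  exact Real.tendsto_exp_atBot.comp h1

lemma exp_quad_zero {A B C : ℝ} (hA : A < 0) :
    Tendsto (fun y : ℝ => Real.exp (A * y ^ 2 + B * y + C)) atTop (nhds 0) := by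
  have hA0 : A ≠ 0 := ne_of_lt hA
  have hrw : ∀ y : ℝ, A * y ^ 2 + B * y + C = A * (y + B / (2 * A)) ^ 2 + (C - B ^ 2 / (4 * A)) := by
    intro y; field_simp; ring
  have hsq : Tendsto (fun y : ℝ => (y + B / (2 * A)) ^ 2) atTop atTop := by
    have h1 : Tendsto (fun y : ℝ => y + B / (2 * A)) atTop atTop :=
      tendsto_atTop_add_const_right _ _ tendsto_id
    exact (tendsto_pow_atTop (by norm_num)).comp h1
  have h2 : Tendsto (fun y : ℝ => A * (y + B / (2 * A)) ^ 2 + (C - B ^ 2 / (4 * A))) atTop atBot :=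
    tendsto_atBot_add_const_right _ _ ((tendsto_const_mul_atBot_of_neg hA).mpr hsq)
  exact (Real.tendsto_exp_atBot.comp h2).congr fun y => congrArg Real.exp (hrw y).symm

lemma prod_one (M S : ℝ) (y : ℝ) :
    Real.exp ((y - M) ^ 2 / (2 * S ^ 2)) * E M S y = 1 := by
  rw [E, ← Real.exp_add, neg_div, add_neg_cancel, Real.exp_zero]

lemma prod_zero (m M s S : ℝ) (hs : 0 < s) (hS : 0 < S)
    (hcase : s < S ∨ (s = S ∧ m < M)) :
    Tendsto (fun y => Real.exp ((y - M) ^ 2 / (2 * S ^ 2)) * E m s y) atTop (nhds 0) := by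
  rcases hcase with hlt | ⟨hse, hmM⟩
  · have hrw : ∀ y : ℝ, Real.exp ((y - M) ^ 2 / (2 * S ^ 2)) * E m s y
        = Real.exp ((1 / (2 * S ^ 2) - 1 / (2 * s ^ 2)) * y ^ 2
            + (m / s ^ 2 - M / S ^ 2) * y + (M ^ 2 / (2 * S ^ 2) - m ^ 2 / (2 * s ^ 2))) := by
      intro y; rw [E, ← Real.exp_add]; congr 1
      field_simp
      ring
    have hA : (1 / (2 * S ^ 2) - 1 / (2 * s ^ 2)) < 0 := by
      have h1 : (0:ℝ) < 2 * s ^ 2 := by positivity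
      have h2 : 2 * s ^ 2 < 2 * S ^ 2 := by nlinarith
      have := one_div_lt_one_div_of_lt h1 h2
      linarith
    exact (exp_quad_zero hA).congr fun y => (hrw y).symm
  · subst hse
    have hrw : ∀ y : ℝ, Real.exp ((y - M) ^ 2 / (2 * s ^ 2)) * E m s y
        = Real.exp (((m - M) / s ^ 2) * y + ((M ^ 2 - m ^ 2) / (2 * s ^ 2))) := by
      intro y; rw [E, ← Real.exp_add]; congr 1
      field_simp
      ring
    have hB : (m - M) / s ^ 2 < 0 :=
      div_neg_of_neg_of_pos (sub_neg.mpr hmM) (by positivity)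
    exact (exp_lin_zero hB).congr fun y => (hrw y).symm

lemma mix_aux (a₁ a₂ b₁ b₂ m₁ m₂ n₁ n₂ s t : ℝ)
    (ha₂ : 0 < a₂) (hm : m₁ < m₂) (hn : n₁ < n₂) (hs : 0 < s) (ht : 0 < t)
    (h : ∀ y, a₁ * E m₁ s y + a₂ * E m₂ s y = b₁ * E n₁ t y + b₂ * E n₂ t y)
    (hcase : t < s ∨ (t = s ∧ n₂ < m₂)) : False := by
  set g : ℝ → ℝ := fun y => Real.exp ((y - m₂) ^ 2 / (2 * s ^ 2)) with hg
  have hL : Tendsto (fun y => g y * (a₁ * E m₁ s y + a₂ * E m₂ s y)) atTop (nhds a₂) := by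
    have h1 : Tendsto (fun y => a₁ * (g y * E m₁ s y) + a₂ * (g y * E m₂ s y)) atTop
        (nhds (a₁ * 0 + a₂ * 1)) := by
      refine Tendsto.add (Tendsto.const_mul _ ?_) (Tendsto.const_mul _ ?_)
      · exact prod_zero m₁ m₂ s s hs hs (Or.inr ⟨rfl, hm⟩)
      · simpa only [hg, prod_one m₂ s] using (tendsto_const_nhds : Tendsto (fun _ : ℝ => (1:ℝ)) atTop (nhds 1))
    have h2 : Tendsto (fun y => g y * (a₁ * E m₁ s y + a₂ * E m₂ s y)) atTop
        (nhds (a₁ * 0 + a₂ * 1)) := h1.congr fun y => by ring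
    simpa using h2
  have hcase1 : t < s ∨ (t = s ∧ n₁ < m₂) := by
    rcases hcase with h | ⟨he, hlt⟩
    · exact Or.inl h
    · exact Or.inr ⟨he, lt_trans hn hlt⟩
  have hR : Tendsto (fun y => g y * (b₁ * E n₁ t y + b₂ * E n₂ t y)) atTop (nhds 0) := by
    have h1 : Tendsto (fun y => b₁ * (g y * E n₁ t y) + b₂ * (g y * E n₂ t y)) atTop
        (nhds (b₁ * 0 + b₂ * 0)) := by
      refine Tendsto.add (Tendsto.const_mul _ ?_) (Tendsto.const_mul _ ?_)
      · exact prod_zero n₁ m₂ t s ht hs hcase1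
      · exact prod_zero n₂ m₂ t s ht hs hcase
    have h2 : Tendsto (fun y => g y * (b₁ * E n₁ t y + b₂ * E n₂ t y)) atTop
        (nhds (b₁ * 0 + b₂ * 0)) := h1.congr fun y => by ring
    simpa using h2
  have hR' : Tendsto (fun y => g y * (a₁ * E m₁ s y + a₂ * E m₂ s y)) atTop (nhds 0) :=
    hR.congr fun y => by rw [h y]
  have : a₂ = 0 := tendsto_nhds_unique hL hR'
  linarith

lemma mix_lim (a₁ a₂ m₁ m₂ s : ℝ) (hm : m₁ < m₂) (hs : 0 < s) :
    Tendsto (fun y => Real.exp ((y - m₂) ^ 2 / (2 * s ^ 2)) * (a₁ * E m₁ s y + a₂ * E m₂ s y))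
      atTop (nhds a₂) := by
  set g : ℝ → ℝ := fun y => Real.exp ((y - m₂) ^ 2 / (2 * s ^ 2)) with hg
  have h1 : Tendsto (fun y => a₁ * (g y * E m₁ s y) + a₂ * (g y * E m₂ s y)) atTop
      (nhds (a₁ * 0 + a₂ * 1)) := by
    refine Tendsto.add (Tendsto.const_mul _ ?_) (Tendsto.const_mul _ ?_)
    · exact prod_zero m₁ m₂ s s hs hs (Or.inr ⟨rfl, hm⟩)
    · simp only [hg, prod_one m₂ s]
      exact tendsto_const_nhds
  have h2 : Tendsto (fun y => g y * (a₁ * E m₁ s y + a₂ * E m₂ s y)) atTop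
      (nhds (a₁ * 0 + a₂ * 1)) := h1.congr fun y => by ring
  simpa using h2

lemma mix_id (a₁ a₂ b₁ b₂ m₁ m₂ n₁ n₂ s t : ℝ)
    (ha₁ : 0 < a₁) (ha₂ : 0 < a₂) (hb₁ : 0 < b₁) (hb₂ : 0 < b₂)
    (hm : m₁ < m₂) (hn : n₁ < n₂) (hs : 0 < s) (ht : 0 < t)
    (h : ∀ y, a₁ * E m₁ s y + a₂ * E m₂ s y = b₁ * E n₁ t y + b₂ * E n₂ t y) :
    s = t ∧ m₂ = n₂ ∧ a₂ = b₂ ∧ m₁ = n₁ ∧ a₁ = b₁ := by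
  have hst : s = t := by
    rcases lt_trichotomy s t with hlt | he | hgt
    · exact absurd (mix_aux b₁ b₂ a₁ a₂ n₁ n₂ m₁ m₂ t s hb₂ hn hm ht hs
        (fun y => (h y).symm) (Or.inl hlt)) id
    · exact he
    · exact absurd (mix_aux a₁ a₂ b₁ b₂ m₁ m₂ n₁ n₂ s t ha₂ hm hn hs ht h (Or.inl hgt)) id
  subst hst
  have hm2 : m₂ = n₂ := by
    rcases lt_trichotomy m₂ n₂ with hlt | he | hgt
    · exact absurd (mix_aux b₁ b₂ a₁ a₂ n₁ n₂ m₁ m₂ s s hb₂ hn hm hs hs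
        (fun y => (h y).symm) (Or.inr ⟨rfl, hlt⟩)) id
    · exact he
    · exact absurd (mix_aux a₁ a₂ b₁ b₂ m₁ m₂ n₁ n₂ s s ha₂ hm hn hs hs h
        (Or.inr ⟨rfl, hgt⟩)) id
  subst hm2
  have ha2 : a₂ = b₂ := by
    refine tendsto_nhds_unique (mix_lim a₁ a₂ m₁ m₂ s hm hs) ?_
    exact (mix_lim b₁ b₂ n₁ m₂ s hn hs).congr fun y => by rw [← h y]
  subst ha2
  have hsub : ∀ y, a₁ * E m₁ s y = b₁ * E n₁ s y := fun y => by
    have := h y; linarith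
  have hE0 : ∀ m : ℝ, E m s m = 1 := fun m => by simp [E]
  set c : ℝ := Real.exp (-(m₁ - n₁) ^ 2 / (2 * s ^ 2)) with hc
  have hcpos : 0 < c := Real.exp_pos _
  have e1 : a₁ = b₁ * c := by
    have := hsub m₁; rwa [hE0 m₁, mul_one, E] at this
  have e2 : a₁ * c = b₁ := by
    have := hsub n₁; rw [hE0 n₁, mul_one, E] at this
    have hsq : -(n₁ - m₁) ^ 2 / (2 * s ^ 2) = -(m₁ - n₁) ^ 2 / (2 * s ^ 2) := by ring
    rwa [hsq] at this
  have hc1 : c = 1 := by nlinarith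
  have hm1 : m₁ = n₁ := by
    rw [hc, Real.exp_eq_one_iff] at hc1
    have hs2 : (2 * s ^ 2) ≠ 0 := by positivity
    have : (m₁ - n₁) ^ 2 = 0 := by
      field_simp at hc1
      nlinarith [hc1]
    nlinarith [this]
  refine ⟨rfl, rfl, rfl, hm1, ?_⟩
  rw [e1, hc1, mul_one]


/-- The normal regression model with a misclassified binary covariate is identified without
knowledge of the reclassification probabilities, given the sign of the slope: if the
two-component mixture densities (over the two observed covariate values `k ∈ {0,1}`) agree,
with positive slopes and with the `k = 0` reclassification weight strictly between 0 and 1,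
then all parameters coincide. -/
theorem normal_misclassified_model_identified
    (α₀ α₀' α₁ α₁' σ σ' : ℝ) (hα₁ : 0 < α₁) (hα₁' : 0 < α₁')
    (hσ : 0 < σ) (hσ' : 0 < σ')
    (q q' : Fin 2 → ℝ)
    (hq : ∀ k, q k ∈ Set.Icc (0 : ℝ) 1) (hq' : ∀ k, q' k ∈ Set.Icc (0 : ℝ) 1)
    (hq0 : q 0 ∈ Set.Ioo (0 : ℝ) 1) (hq0' : q' 0 ∈ Set.Ioo (0 : ℝ) 1)
    (heq : ∀ k : Fin 2, ∀ y : ℝ,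
      q k * gaussDensity α₀ σ y + (1 - q k) * gaussDensity (α₀ + α₁) σ y =
        q' k * gaussDensity α₀' σ' y + (1 - q' k) * gaussDensity (α₀' + α₁') σ' y) :
    α₀ = α₀' ∧ α₁ = α₁' ∧ σ = σ' ∧ q 0 = q' 0 ∧ q 1 = q' 1 := by
  have hsqrt : 0 < Real.sqrt (2 * Real.pi) := Real.sqrt_pos.mpr (by positivity)
  set c : ℝ := (σ * Real.sqrt (2 * Real.pi))⁻¹ with hcdef
  set c' : ℝ := (σ' * Real.sqrt (2 * Real.pi))⁻¹ with hcdef'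
  have hcpos : 0 < c := by rw [hcdef]; positivity
  have hcpos' : 0 < c' := by rw [hcdef']; positivity
  obtain ⟨hq0l, hq0u⟩ := hq0
  obtain ⟨hq0l', hq0u'⟩ := hq0'
  have h0 : ∀ y, (q 0 * c) * E α₀ σ y + ((1 - q 0) * c) * E (α₀ + α₁) σ y =
      (q' 0 * c') * E α₀' σ' y + ((1 - q' 0) * c') * E (α₀' + α₁') σ' y := fun y => by
    have := heq 0 y
    simp only [gaussDensity, E] at this ⊢
    linear_combination this
  obtain ⟨hst, hm2, ha2, hm1, _⟩ := mix_id (q 0 * c) ((1 - q 0) * c) (q' 0 * c') ((1 - q' 0) * c')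
    α₀ (α₀ + α₁) α₀' (α₀' + α₁') σ σ'
    (by positivity) (mul_pos (by linarith) hcpos) (by positivity)
    (mul_pos (by linarith) hcpos') (by linarith) (by linarith) hσ hσ' h0
  have hA0 : α₀ = α₀' := hm1
  have hA1 : α₁ = α₁' := by linarith
  have hcc : c = c' := by rw [hcdef, hcdef', hst]
  have hq00 : q 0 = q' 0 := by
    rw [hcc] at ha2
    have := mul_right_cancel₀ (ne_of_gt hcpos') ha2
    linarith
  refine ⟨hA0, hA1, hst, hq00, ?_⟩
  -- k = 1
  subst hA0; subst hst
  rw [← hA1] at heq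
  have h1 := heq 1 α₀
  have hg : gaussDensity (α₀ + α₁) σ α₀ < gaussDensity α₀ σ α₀ := by
    simp only [gaussDensity]
    have h01 : -(α₀ - α₀) ^ 2 / (2 * σ ^ 2) = 0 := by ring
    have hneg : -(α₀ - (α₀ + α₁)) ^ 2 / (2 * σ ^ 2) < 0 := by
      apply div_neg_of_neg_of_pos _ (by positivity)
      have : α₀ - (α₀ + α₁) = -α₁ := by ring
      rw [this]
      nlinarith
    rw [h01, Real.exp_zero]
    have := Real.exp_lt_one_iff.mpr hneg
    calc c * Real.exp (-(α₀ - (α₀ + α₁)) ^ 2 / (2 * σ ^ 2)) < c * 1 := by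
          exact mul_lt_mul_of_pos_left this hcpos
      _ = c * 1 := rfl
  have hfac : (q 1 - q' 1) * (gaussDensity α₀ σ α₀ - gaussDensity (α₀ + α₁) σ α₀) = 0 := by
    linear_combination h1
  rcases mul_eq_zero.mp hfac with h | h
  · linarith
  · linarith
end
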